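/- arXiv:1501.05477 — 2 statements merged into one kernel-verified Lean document; each statement's English description precedes it below -/
import Mathlib

section
/- For all i ∈ (ZMod 2)^{2m}, the conditions σ_m(i) = 1 and τ_m(i) = 1 are mutually exclusive: σ_m(i) = 1 → τ_m(i) = 0. -/
/-- The sign-of-square function `σ_m` on bit strings: the parity of the number of
bit-pairs equal to `01`. -/
def sigma (m : ℕ) (i : Fin (2 * m) → ZMod 2) : ZMod 2 :=
  ∑ j : Fin m,
    if i ⟨2 * j.1, by have := j.2; omega⟩ = 0 ∧ i ⟨2 * j.1 + 1, by have := j.2; omega⟩ = 1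
    then 1 else 0

/-- The tail of a bit string after removing its leading bit-pair. -/
def tail2 (m : ℕ) (i : Fin (2 * (m + 1)) → ZMod 2) (j : Fin (2 * m)) : ZMod 2 :=
  i ⟨j.1 + 2, by have := j.2; omega⟩

/-- The non-diagonal-symmetry function `τ_m`, defined recursively:
`τ_m(00⊙i) = τ_{m-1}(i)`, `τ_m(01⊙i) = σ_{m-1}(i)`, `τ_m(10⊙i) = σ_{m-1}(i) + 1`,
`τ_m(11⊙i) = τ_{m-1}(i)`; in particular `τ_1(10) = 1` and `τ_1 = 0` otherwise. -/
def tau : (m : ℕ) → (Fin (2 * m) → ZMod 2) → ZMod 2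
  | 0, _ => 0
  | m + 1, i =>
    if i ⟨0, by omega⟩ = 0 ∧ i ⟨1, by omega⟩ = 0 then tau m (tail2 m i)
    else if i ⟨0, by omega⟩ = 0 ∧ i ⟨1, by omega⟩ = 1 then sigma m (tail2 m i)
    else if i ⟨0, by omega⟩ = 1 ∧ i ⟨1, by omega⟩ = 0 then sigma m (tail2 m i) + 1
    else tau m (tail2 m i)

lemma sigma_succ (m : ℕ) (i : Fin (2 * (m + 1)) → ZMod 2) :
    sigma (m + 1) i =
      (if i ⟨0, by omega⟩ = 0 ∧ i ⟨1, by omega⟩ = 1 then 1 else 0)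
        + sigma m (tail2 m i) := by
  rw [sigma, Fin.sum_univ_succ]
  congr 1

/-- The conditions `σ_m(i) = 1` and `τ_m(i) = 1` are mutually exclusive. -/
theorem sigma_tau_mutually_exclusive (m : ℕ) (i : Fin (2 * m) → ZMod 2)
    (h : sigma m i = 1) : tau m i = 0 := by
  induction m with
  | zero => simp [sigma] at h
  | succ m ih =>
    rw [sigma_succ] at h
    rw [tau]
    have key : ∀ x : ZMod 2, x = 0 ∨ x = 1 := by decide
    have h0 := key (i ⟨0, by omega⟩)
    have h1 := key (i ⟨1, by omega⟩)
    rcases h0 with h0 | h0 <;> rcases h1 with h1 | h1 <;>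
      simp only [h0, h1, one_ne_zero, zero_ne_one, and_true, and_false, true_and, false_and,
        if_true, if_false, and_self, zero_add] at h ⊢
    · exact ih _ h
    · -- 01: h : 1 + sigma tail = 1
      linear_combination h
    · -- 10: h : sigma tail = 1
      rw [h]; decide
    · exact ih _ h
end

section
/- For every m ≥ 1, there exists i ∈ (ZMod 2)^{2m} with σ_m(i) = 0 and τ_m(i) = 0 (e.g. i = 0); in fact the number of such i is exactly 2^m. -/
def cons2 (m : ℕ) (a b : ZMod 2) (t : Fin (2 * m) → ZMod 2) :
    Fin (2 * (m + 1)) → ZMod 2 :=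
  fun j => if _ : j.1 = 0 then a else if _ : j.1 = 1 then b
    else t ⟨j.1 - 2, by have := j.2; omega⟩

lemma cons2_zero (m a b t) (h : 0 < 2 * (m+1)) : cons2 m a b t ⟨0, h⟩ = a := rfl
lemma cons2_one (m a b t) (h : 1 < 2 * (m+1)) : cons2 m a b t ⟨1, h⟩ = b := rfl

lemma tail2_cons2 (m a b t) : tail2 m (cons2 m a b t) = t := by
  funext j
  simp only [tail2, cons2]
  rw [dif_neg (by omega), dif_neg (by omega)]
  exact congrArg t (Fin.ext (show j.1 + 2 - 2 = j.1 by omega))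

lemma sigma_cons2 (m a b t) :
    sigma (m + 1) (cons2 m a b t) = (if a = 0 ∧ b = 1 then 1 else 0) + sigma m t := by
  unfold sigma
  rw [Fin.sum_univ_succ]
  refine congrArg₂ (· + ·) ?_ ?_
  · simp [cons2]
  · apply Finset.sum_congr rfl
    intro j _
    have h1 : cons2 m a b t ⟨2 * (j.succ : ℕ), by have := j.2; omega⟩
        = t ⟨2 * j.1, by have := j.2; omega⟩ := by
      simp only [cons2, Fin.val_succ]
      rw [dif_neg (by omega), dif_neg (by omega)]
      exact congrArg t (Fin.ext (show 2 * (j.1 + 1) - 2 = 2 * j.1 by omega))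
    have h2 : cons2 m a b t ⟨2 * (j.succ : ℕ) + 1, by have := j.2; omega⟩
        = t ⟨2 * j.1 + 1, by have := j.2; omega⟩ := by
      simp only [cons2, Fin.val_succ]
      rw [dif_neg (by omega), dif_neg (by omega)]
      exact congrArg t (Fin.ext (show 2 * (j.1 + 1) + 1 - 2 = 2 * j.1 + 1 by omega))
    rw [h1, h2]

lemma tau_cons2 (m a b t) :
    tau (m + 1) (cons2 m a b t) =
      if a = 0 ∧ b = 0 then tau m t
      else if a = 0 ∧ b = 1 then sigma m t
      else if a = 1 ∧ b = 0 then sigma m t + 1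
      else tau m t := by
  simp only [tau, cons2_zero, cons2_one, tail2_cons2]

def E (m : ℕ) : ((ZMod 2 × ZMod 2) × (Fin (2 * m) → ZMod 2)) ≃ (Fin (2 * (m + 1)) → ZMod 2) where
  toFun p := cons2 m p.1.1 p.1.2 p.2
  invFun i := ((i ⟨0, by omega⟩, i ⟨1, by omega⟩), tail2 m i)
  left_inv p := by
    obtain ⟨⟨a, b⟩, t⟩ := p
    refine Prod.ext (Prod.ext ?_ ?_) (tail2_cons2 m a b t) <;> rfl
  right_inv i := by
    funext j
    simp only [cons2, tail2]
    split_ifs with h0 h1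
    · exact (congrArg i (Fin.ext h0.symm))
    · exact (congrArg i (Fin.ext h1.symm))
    · exact congrArg i (Fin.ext (show j.1 - 2 + 2 = j.1 by omega))

lemma E_apply (m : ℕ) (p) : E m p = cons2 m p.1.1 p.1.2 p.2 := rfl

lemma zmod2_sum {M : Type*} [AddCommMonoid M] (h : ZMod 2 → M) :
    ∑ a : ZMod 2, h a = h 0 + h 1 := by
  have : (Finset.univ : Finset (ZMod 2)) = {0, 1} := by decide
  rw [this, Finset.sum_insert (by decide), Finset.sum_singleton]

lemma tau_zero_fun : ∀ m, tau m 0 = 0 := by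
  intro m
  induction m with
  | zero => rfl
  | succ m ih =>
    have ht : tail2 m 0 = 0 := by funext j; rfl
    simp [tau, ht, ih]

lemma sigma_zero_fun (m : ℕ) : sigma m 0 = 0 := by
  simp [sigma]

lemma count_eq (m : ℕ) :
    (Finset.univ.filter
      (fun i : Fin (2 * m) → ZMod 2 => sigma m i = 0 ∧ tau m i = 0)).card = 2 ^ m := by
  induction m with
  | zero => decide
  | succ m ih =>
    have hcard :
        (Finset.univ.filter
          (fun i : Fin (2 * (m+1)) → ZMod 2 => sigma (m+1) i = 0 ∧ tau (m+1) i = 0)).card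
        = (Finset.univ.filter
            (fun p : (ZMod 2 × ZMod 2) × (Fin (2 * m) → ZMod 2) =>
              sigma (m+1) (E m p) = 0 ∧ tau (m+1) (E m p) = 0)).card := by
      rw [← Fintype.card_subtype, ← Fintype.card_subtype]
      exact Fintype.card_congr ((E m).subtypeEquiv (fun p => Iff.rfl)).symm
    rw [hcard, Finset.card_filter, Fintype.sum_prod_type, Fintype.sum_prod_type]
    simp only [E_apply, sigma_cons2, tau_cons2, zmod2_sum]
    norm_num
    have hB : (Finset.filter (fun x : Fin (2*m) → ZMod 2 => 1 + sigma m x = 0 ∧ sigma m x = 0)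
        Finset.univ).card = 0 := by
      refine Finset.card_eq_zero.2 (Finset.filter_eq_empty_iff.2 ?_)
      rintro x - ⟨h1, h2⟩
      rw [h2, add_zero] at h1
      exact one_ne_zero h1
    have hC : (Finset.filter (fun x : Fin (2*m) → ZMod 2 => sigma m x = 0 ∧ sigma m x + 1 = 0)
        Finset.univ).card = 0 := by
      refine Finset.card_eq_zero.2 (Finset.filter_eq_empty_iff.2 ?_)
      rintro x - ⟨h1, h2⟩
      rw [h1, zero_add] at h2
      exact one_ne_zero h2
    rw [ih, hB, hC]
    ring

/-- For every `m ≥ 1` there exists `i` with `σ_m(i) = τ_m(i) = 0` (e.g. `i = 0`);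
in fact the number of such `i` is exactly `2^m`. -/
theorem sigma_tau_common_zeros (m : ℕ) (hm : 1 ≤ m) :
    (sigma m 0 = 0 ∧ tau m 0 = 0) ∧
    (Finset.univ.filter
      (fun i : Fin (2 * m) → ZMod 2 => sigma m i = 0 ∧ tau m i = 0)).card = 2 ^ m :=
  ⟨⟨sigma_zero_fun m, tau_zero_fun m⟩, count_eq m⟩
end
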